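/- arXiv:2204.01432 — 3 statements merged into one kernel-verified Lean document; each statement's English description precedes it below -/
import Mathlib

section
/- Suppose κ ≥ 0 and w is a classical solution of the controlled tube system whose boundary input is the negative-velocity feedback u(t) = −κ·(∂²w/∂s∂t)(1,t). Then for every t > 0 one has E′(t) = −βη·((∂w/∂t)(1,t))² − κ·((∂²w/∂s∂t)(1,t))² ≤ 0; in particular the energy E is nonincreasing on (0,∞). -/
open Set MeasureTheory

/-- ∂w/∂s -/
noncomputable def dws (w : ℝ → ℝ → ℝ) (s t : ℝ) : ℝ := deriv (fun σ => w σ t) s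
/-- ∂²w/∂s² -/
noncomputable def dwss (w : ℝ → ℝ → ℝ) (s t : ℝ) : ℝ := deriv (fun σ => dws w σ t) s
/-- ∂³w/∂s³ -/
noncomputable def dwsss (w : ℝ → ℝ → ℝ) (s t : ℝ) : ℝ := deriv (fun σ => dwss w σ t) s
/-- ∂⁴w/∂s⁴ -/
noncomputable def dwssss (w : ℝ → ℝ → ℝ) (s t : ℝ) : ℝ := deriv (fun σ => dwsss w σ t) s
/-- ∂w/∂t -/
noncomputable def dwt (w : ℝ → ℝ → ℝ) (s t : ℝ) : ℝ := deriv (fun τ => w s τ) t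
/-- ∂²w/∂t² -/
noncomputable def dwtt (w : ℝ → ℝ → ℝ) (s t : ℝ) : ℝ := deriv (fun τ => dwt w s τ) t
/-- ∂²w/∂s∂t -/
noncomputable def dwst (w : ℝ → ℝ → ℝ) (s t : ℝ) : ℝ := deriv (fun σ => dwt w σ t) s

/-- A classical solution of the controlled tube system with boundary input `u`. -/
def IsClassicalSolution (β η γ : ℝ) (u : ℝ → ℝ) (w : ℝ → ℝ → ℝ) : Prop :=
  ContDiff ℝ 4 (Function.uncurry w) ∧
  (∀ s ∈ Icc (0:ℝ) 1, ∀ t > (0:ℝ),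
    dwssss w s t - (γ - η^2) * dwss w s t + 2*β*η * dwst w s t + dwtt w s t = 0) ∧
  (∀ t > (0:ℝ), w 0 t = 0) ∧
  (∀ t > (0:ℝ), dwss w 0 t = 0) ∧
  (∀ t > (0:ℝ), dwss w 1 t = u t) ∧
  (∀ t > (0:ℝ), dwsss w 1 t = (γ - η^2) * dws w 1 t)

/-- The energy of the tube system. -/
noncomputable def energy (η γ : ℝ) (w : ℝ → ℝ → ℝ) (t : ℝ) : ℝ :=
  (1/2) * ∫ s in (0:ℝ)..1,
    ((dwss w s t)^2 + (γ - η^2) * (dws w s t)^2 + (dwt w s t)^2)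

/-- directional partial derivative in `s` -/
noncomputable def pS (G : ℝ × ℝ → ℝ) : ℝ × ℝ → ℝ := fun p => fderiv ℝ G p (1, 0)
/-- directional partial derivative in `t` -/
noncomputable def pT (G : ℝ × ℝ → ℝ) : ℝ × ℝ → ℝ := fun p => fderiv ℝ G p (0, 1)

lemma hasDerivAt_sliceS {G : ℝ × ℝ → ℝ} {s t : ℝ} (hG : DifferentiableAt ℝ G (s, t)) :
    HasDerivAt (fun σ => G (σ, t)) (pS G (s, t)) s := by
  have h1 : HasDerivAt (fun σ : ℝ => (σ, t)) ((1 : ℝ), (0 : ℝ)) s :=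
    (hasDerivAt_id s).prodMk (hasDerivAt_const s t)
  exact hG.hasFDerivAt.comp_hasDerivAt s h1

lemma hasDerivAt_sliceT {G : ℝ × ℝ → ℝ} {s t : ℝ} (hG : DifferentiableAt ℝ G (s, t)) :
    HasDerivAt (fun τ => G (s, τ)) (pT G (s, t)) t := by
  have h1 : HasDerivAt (fun τ : ℝ => (s, τ)) ((0 : ℝ), (1 : ℝ)) t :=
    (hasDerivAt_const t s).prodMk (hasDerivAt_id t)
  exact hG.hasFDerivAt.comp_hasDerivAt t h1

lemma contDiff_pdir {n : ℕ∞} {G : ℝ × ℝ → ℝ} (hG : ContDiff ℝ (n + 1) G) (u : ℝ × ℝ) :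
    ContDiff ℝ n fun p => fderiv ℝ G p u :=
  (hG.fderiv_right le_rfl).clm_apply contDiff_const

lemma contDiff_pS {n : ℕ∞} {G : ℝ × ℝ → ℝ} (hG : ContDiff ℝ (n + 1) G) :
    ContDiff ℝ n (pS G) := contDiff_pdir hG _

lemma contDiff_pT {n : ℕ∞} {G : ℝ × ℝ → ℝ} (hG : ContDiff ℝ (n + 1) G) :
    ContDiff ℝ n (pT G) := contDiff_pdir hG _

lemma hasFDerivAt_pdir {G : ℝ × ℝ → ℝ} (hG : ContDiff ℝ 2 G) (u : ℝ × ℝ) (p : ℝ × ℝ) :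
    HasFDerivAt (fun q => fderiv ℝ G q u)
      ((ContinuousLinearMap.apply ℝ ℝ u).comp (fderiv ℝ (fderiv ℝ G) p)) p := by
  have hfd : HasFDerivAt (fderiv ℝ G) (fderiv ℝ (fderiv ℝ G) p) p :=
    (((hG.fderiv_right (m := 1) (by norm_num)).differentiable one_ne_zero) p).hasFDerivAt
  exact ((ContinuousLinearMap.apply ℝ ℝ u).hasFDerivAt).comp p hfd

lemma pdir_pdir {G : ℝ × ℝ → ℝ} (hG : ContDiff ℝ 2 G) (u v : ℝ × ℝ) (p : ℝ × ℝ) :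
    fderiv ℝ (fun q => fderiv ℝ G q v) p u = fderiv ℝ (fderiv ℝ G) p u v := by
  rw [(hasFDerivAt_pdir hG v p).fderiv]; rfl

lemma pdir_swap {G : ℝ × ℝ → ℝ} (hG : ContDiff ℝ 2 G) (u v : ℝ × ℝ) (p : ℝ × ℝ) :
    fderiv ℝ (fun q => fderiv ℝ G q v) p u = fderiv ℝ (fun q => fderiv ℝ G q u) p v := by
  rw [pdir_pdir hG u v p, pdir_pdir hG v u p]
  have hfd : HasFDerivAt (fderiv ℝ G) (fderiv ℝ (fderiv ℝ G) p) p :=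
    (((hG.fderiv_right (m := 1) (by norm_num)).differentiable one_ne_zero) p).hasFDerivAt
  exact second_derivative_symmetric
    (fun y => ((hG.differentiable (by norm_num) y).hasFDerivAt)) hfd u v

lemma pS_pT_swap {G : ℝ × ℝ → ℝ} (hG : ContDiff ℝ 2 G) (p : ℝ × ℝ) :
    pS (pT G) p = pT (pS G) p := pdir_swap hG _ _ p

/-- under the negative-velocity feedback
`u(t) = −κ·(∂²w/∂s∂t)(1,t)`, the energy satisfies
`E′(t) = −βη·((∂w/∂t)(1,t))² − κ·((∂²w/∂s∂t)(1,t))² ≤ 0` for every `t > 0`;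
in particular `E` is nonincreasing on `(0,∞)`. -/
theorem energy_derivative_feedback (β η γ κ : ℝ) (hβ : β ∈ Ioo (0:ℝ) 1)
    (hη : 0 ≤ η) (hκ : 0 ≤ κ) (hγ : η^2 < γ)
    (w : ℝ → ℝ → ℝ)
    (hw : IsClassicalSolution β η γ (fun t => -κ * dwst w 1 t) w) :
    (∀ t > (0:ℝ),
      HasDerivAt (energy η γ w)
        (-(β*η) * (dwt w 1 t)^2 - κ * (dwst w 1 t)^2) t ∧
      -(β*η) * (dwt w 1 t)^2 - κ * (dwst w 1 t)^2 ≤ 0) ∧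
    AntitoneOn (energy η γ w) (Ioi 0) := by
  obtain ⟨hC, hPDE, hBC0, hBCss0, hBCss1, hBCsss1⟩ := hw
  set c : ℝ := γ - η ^ 2 with hcdef
  set W : ℝ × ℝ → ℝ := Function.uncurry w with hWdef
  -- smoothness of the various partial derivatives
  have hA1 : ContDiff ℝ 3 (pS W) := contDiff_pS (hC.of_le (by norm_num))
  have hA2 : ContDiff ℝ 2 (pS (pS W)) := contDiff_pS (hA1.of_le (by norm_num))
  have hA3 : ContDiff ℝ 1 (pS (pS (pS W))) := contDiff_pS (hA2.of_le (by norm_num))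
  have hA4 : ContDiff ℝ 0 (pS (pS (pS (pS W)))) := contDiff_pS (hA3.of_le (by norm_num))
  have hB1 : ContDiff ℝ 3 (pT W) := contDiff_pT (hC.of_le (by norm_num))
  have hB2 : ContDiff ℝ 2 (pT (pT W)) := contDiff_pT (hB1.of_le (by norm_num))
  have hCm : ContDiff ℝ 2 (pT (pS W)) := contDiff_pT (hA1.of_le (by norm_num))
  have hT2 : ContDiff ℝ 1 (pT (pS (pS W))) := contDiff_pT (hA2.of_le (by norm_num))
  have hDsB1 : ContDiff ℝ 2 (pS (pT W)) := contDiff_pS (hB1.of_le (by norm_num))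
  have hDsC : ContDiff ℝ 1 (pS (pT (pS W))) := contDiff_pS (hCm.of_le (by norm_num))
  have hWd : Differentiable ℝ W := hC.differentiable (by norm_num)
  have hA1d : Differentiable ℝ (pS W) := hA1.differentiable (by norm_num)
  have hA2d : Differentiable ℝ (pS (pS W)) := hA2.differentiable (by norm_num)
  have hA3d : Differentiable ℝ (pS (pS (pS W))) := hA3.differentiable (by norm_num)
  have hB1d : Differentiable ℝ (pT W) := hB1.differentiable (by norm_num)
  have hCmd : Differentiable ℝ (pT (pS W)) := hCm.differentiable (by norm_num)
  -- identification of the curried partial derivatives with directional fderivs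
  have idws : ∀ s t : ℝ, dws w s t = pS W (s, t) := fun s t =>
    (hasDerivAt_sliceS (hWd (s, t))).deriv
  have idwt : ∀ s t : ℝ, dwt w s t = pT W (s, t) := fun s t =>
    (hasDerivAt_sliceT (hWd (s, t))).deriv
  have idwss : ∀ s t : ℝ, dwss w s t = pS (pS W) (s, t) := by
    intro s t
    show deriv (fun σ => dws w σ t) s = _
    rw [funext fun σ => idws σ t]
    exact (hasDerivAt_sliceS (hA1d (s, t))).deriv
  have idwsss : ∀ s t : ℝ, dwsss w s t = pS (pS (pS W)) (s, t) := by
    intro s t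
    show deriv (fun σ => dwss w σ t) s = _
    rw [funext fun σ => idwss σ t]
    exact (hasDerivAt_sliceS (hA2d (s, t))).deriv
  have idwssss : ∀ s t : ℝ, dwssss w s t = pS (pS (pS (pS W))) (s, t) := by
    intro s t
    show deriv (fun σ => dwsss w σ t) s = _
    rw [funext fun σ => idwsss σ t]
    exact (hasDerivAt_sliceS (hA3d (s, t))).deriv
  have idwtt : ∀ s t : ℝ, dwtt w s t = pT (pT W) (s, t) := by
    intro s t
    show deriv (fun τ => dwt w s τ) t = _
    rw [funext fun τ => idwt s τ]
    exact (hasDerivAt_sliceT (hB1d (s, t))).deriv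
  have idwst : ∀ s t : ℝ, dwst w s t = pT (pS W) (s, t) := by
    intro s t
    show deriv (fun σ => dwt w σ t) s = _
    rw [funext fun σ => idwt σ t, ← pS_pT_swap (hC.of_le (by norm_num)) (s, t)]
    exact (hasDerivAt_sliceS (hB1d (s, t))).deriv
  -- rewrite the energy
  have hEnergy : energy η γ w = fun τ => (1/2) * ∫ s in (0:ℝ)..1,
      ((pS (pS W) (s, τ))^2 + c * (pS W (s, τ))^2 + (pT W (s, τ))^2) := by
    funext τ
    simp only [energy, ← hcdef]
    congr 1
    refine intervalIntegral.integral_congr fun s _ => ?_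
    rw [idws, idwss, idwt]
  -- the time derivative of the integrand
  have hfd : ∀ s τ : ℝ, HasDerivAt
      (fun τ' => (pS (pS W) (s, τ'))^2 + c * (pS W (s, τ'))^2 + (pT W (s, τ'))^2)
      (2 * pS (pS W) (s, τ) * pT (pS (pS W)) (s, τ)
        + c * (2 * pS W (s, τ) * pT (pS W) (s, τ))
        + 2 * pT W (s, τ) * pT (pT W) (s, τ)) τ := by
    intro s τ
    have h1 := hasDerivAt_sliceT (hA2d (s, τ))
    have h2 := hasDerivAt_sliceT (hA1d (s, τ))
    have h3 := hasDerivAt_sliceT (hB1d (s, τ))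
    have H := ((h1.fun_pow 2).add ((h2.fun_pow 2).const_mul c)).add (h3.fun_pow 2)
    refine H.congr_deriv ?_
    push_cast
    norm_num only [pow_one]
  have cg : Continuous (fun p : ℝ × ℝ =>
      2 * pS (pS W) p * pT (pS (pS W)) p + c * (2 * pS W p * pT (pS W) p)
        + 2 * pT W p * pT (pT W) p) := by
    have := hA2.continuous; have := hT2.continuous; have := hA1.continuous
    have := hCm.continuous; have := hB1.continuous; have := hB2.continuous
    fun_prop
  have key : ∀ t > (0:ℝ), HasDerivAt (energy η γ w)
      (-(β*η) * (dwt w 1 t)^2 - κ * (dwst w 1 t)^2) t := by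
    intro t ht
    -- bound on the derivative on a compact set
    obtain ⟨M, hM⟩ := ((isCompact_Icc.prod isCompact_Icc :
        IsCompact ((Icc (0:ℝ) 1) ×ˢ (Icc (t-1) (t+1))))).exists_bound_of_continuousOn
        cg.continuousOn
    have cslice : ∀ x : ℝ, Continuous fun s : ℝ => (s, x) := fun x =>
      continuous_id.prodMk continuous_const
    have cf : Continuous (fun p : ℝ × ℝ =>
        (pS (pS W) p)^2 + c * (pS W p)^2 + (pT W p)^2) := by
      have := hA2.continuous; have := hA1.continuous; have := hB1.continuous
      fun_prop
    have main := intervalIntegral.hasDerivAt_integral_of_dominated_loc_of_deriv_le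
      (F := fun τ s => (pS (pS W) (s, τ))^2 + c * (pS W (s, τ))^2 + (pT W (s, τ))^2)
      (F' := fun τ s => 2 * pS (pS W) (s, τ) * pT (pS (pS W)) (s, τ)
        + c * (2 * pS W (s, τ) * pT (pS W) (s, τ)) + 2 * pT W (s, τ) * pT (pT W) (s, τ))
      (x₀ := t) (s := Metric.ball t 1) (a := 0) (b := 1) (bound := fun _ => M) (μ := volume)
      (Metric.ball_mem_nhds t one_pos)
      (Filter.Eventually.of_forall fun x =>
        ((cf.comp (cslice x)).aestronglyMeasurable))
      ((cf.comp (cslice t)).intervalIntegrable 0 1)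
      ((cg.comp (cslice t)).aestronglyMeasurable)
      (Filter.Eventually.of_forall fun s hs x hx => by
        refine hM (s, x) ⟨?_, ?_⟩
        · rw [uIoc_of_le (by norm_num : (0:ℝ) ≤ 1)] at hs
          exact Ioc_subset_Icc_self hs
        · rw [Metric.mem_ball, Real.dist_eq] at hx
          constructor <;> [linarith [abs_lt.mp hx]; linarith [abs_lt.mp hx]])
      intervalIntegrable_const
      (Filter.Eventually.of_forall fun s hs x hx => hfd s x)
    have hE' : HasDerivAt (energy η γ w)
        ((1/2) * ∫ s in (0:ℝ)..1,
          (2 * pS (pS W) (s, t) * pT (pS (pS W)) (s, t)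
            + c * (2 * pS W (s, t) * pT (pS W) (s, t))
            + 2 * pT W (s, t) * pT (pT W) (s, t))) t := by
      rw [hEnergy]
      exact main.2.const_mul (1/2)
    -- FTC computation of the integral
    set Φ : ℝ → ℝ := fun s => pS (pS W) (s, t) * pT (pS W) (s, t)
        - pT W (s, t) * pS (pS (pS W)) (s, t)
        + c * (pT W (s, t) * pS W (s, t))
        - (β*η) * (pT W (s, t) * pT W (s, t)) with hΦdef
    set ψ : ℝ → ℝ := fun s =>
        (pS (pS (pS W)) (s, t) * pT (pS W) (s, t)
          + pS (pS W) (s, t) * pS (pT (pS W)) (s, t))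
        - (pS (pT W) (s, t) * pS (pS (pS W)) (s, t)
          + pT W (s, t) * pS (pS (pS (pS W))) (s, t))
        + c * (pS (pT W) (s, t) * pS W (s, t) + pT W (s, t) * pS (pS W) (s, t))
        - (β*η) * (pS (pT W) (s, t) * pT W (s, t) + pT W (s, t) * pS (pT W) (s, t))
        with hψdef
    have hΦd : ∀ s : ℝ, HasDerivAt Φ (ψ s) s := by
      intro s
      have d1 : HasDerivAt (fun σ => pS (pS W) (σ, t)) (pS (pS (pS W)) (s, t)) s :=
        hasDerivAt_sliceS (hA2d (s, t))
      have d2 : HasDerivAt (fun σ => pT (pS W) (σ, t)) (pS (pT (pS W)) (s, t)) s :=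
        hasDerivAt_sliceS (hCmd (s, t))
      have d3 : HasDerivAt (fun σ => pT W (σ, t)) (pS (pT W) (s, t)) s :=
        hasDerivAt_sliceS (hB1d (s, t))
      have d4 : HasDerivAt (fun σ => pS (pS (pS W)) (σ, t)) (pS (pS (pS (pS W))) (s, t)) s :=
        hasDerivAt_sliceS (hA3d (s, t))
      have d5 : HasDerivAt (fun σ => pS W (σ, t)) (pS (pS W) (s, t)) s :=
        hasDerivAt_sliceS (hA1d (s, t))
      exact (((d1.mul d2).sub (d3.mul d4)).add ((d3.mul d5).const_mul c)).sub
        ((d3.mul d3).const_mul (β*η))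
    have hψc : Continuous ψ := by
      have := hA3.continuous; have := hCm.continuous; have := hA2.continuous
      have := hDsC.continuous; have := hDsB1.continuous; have := hB1.continuous
      have := hA4.continuous; have := hA1.continuous
      rw [hψdef]; fun_prop
    have hFTC : ∫ s in (0:ℝ)..1, ψ s = Φ 1 - Φ 0 :=
      intervalIntegral.integral_eq_sub_of_hasDerivAt (fun s _ => hΦd s)
        (hψc.intervalIntegrable 0 1)
    have hgψ : EqOn (fun s => 2 * pS (pS W) (s, t) * pT (pS (pS W)) (s, t)
        + c * (2 * pS W (s, t) * pT (pS W) (s, t))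
        + 2 * pT W (s, t) * pT (pT W) (s, t)) (fun s => 2 * ψ s) (uIcc (0:ℝ) 1) := by
      intro s hs
      have hs' : s ∈ Icc (0:ℝ) 1 := by rwa [uIcc_of_le (by norm_num : (0:ℝ) ≤ 1)] at hs
      have hpde := hPDE s hs' t ht
      rw [idwssss, idwss, idwst, idwtt] at hpde
      have sw1 : pS (pT W) (s, t) = pT (pS W) (s, t) :=
        pS_pT_swap (hC.of_le (by norm_num)) (s, t)
      have sw2 : pS (pT (pS W)) (s, t) = pT (pS (pS W)) (s, t) :=
        pS_pT_swap (hA1.of_le (by norm_num)) (s, t)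
      simp only [hψdef, sw1, sw2]
      linear_combination (2 * pT W (s, t)) * hpde
    have hint : (∫ s in (0:ℝ)..1, (2 * pS (pS W) (s, t) * pT (pS (pS W)) (s, t)
        + c * (2 * pS W (s, t) * pT (pS W) (s, t))
        + 2 * pT W (s, t) * pT (pT W) (s, t))) = 2 * (Φ 1 - Φ 0) := by
      rw [intervalIntegral.integral_congr hgψ, intervalIntegral.integral_const_mul, hFTC]
    -- boundary values
    have hB10 : pT W (0, t) = 0 := by
      rw [← idwt 0 t]
      show deriv (fun τ => w 0 τ) t = 0
      have hev : (fun τ => w 0 τ) =ᶠ[nhds t] fun _ => (0:ℝ) := by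
        filter_upwards [isOpen_Ioi.mem_nhds ht] with τ hτ using hBC0 τ hτ
      rw [hev.deriv_eq, deriv_const]
    have hA20 : pS (pS W) (0, t) = 0 := by rw [← idwss]; exact hBCss0 t ht
    have hA21 : pS (pS W) (1, t) = -κ * pT (pS W) (1, t) := by
      rw [← idwss, ← idwst]; exact hBCss1 t ht
    have hA31 : pS (pS (pS W)) (1, t) = c * pS W (1, t) := by
      rw [← idwsss, ← idws]; exact hBCsss1 t ht
    have hval : (1/2) * (∫ s in (0:ℝ)..1, (2 * pS (pS W) (s, t) * pT (pS (pS W)) (s, t)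
        + c * (2 * pS W (s, t) * pT (pS W) (s, t))
        + 2 * pT W (s, t) * pT (pT W) (s, t)))
        = -(β*η) * (dwt w 1 t)^2 - κ * (dwst w 1 t)^2 := by
      rw [hint, idwt, idwst]
      simp only [hΦdef, hA20, hB10, hA21, hA31]
      ring
    rw [← hval]
    exact hE'
  have keynp : ∀ t > (0:ℝ), -(β*η) * (dwt w 1 t)^2 - κ * (dwst w 1 t)^2 ≤ 0 := by
    intro t ht
    have h1 : 0 ≤ β * η := mul_nonneg hβ.1.le hη
    nlinarith [sq_nonneg (dwt w 1 t), sq_nonneg (dwst w 1 t)]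
  refine ⟨fun t ht => ⟨key t ht, keynp t ht⟩, ?_⟩
  refine antitoneOn_of_deriv_nonpos (convex_Ioi 0) ?_ ?_ ?_
  · exact fun x hx => ((key x hx).differentiableAt.continuousAt.continuousWithinAt)
  · intro x hx
    rw [interior_Ioi] at hx
    exact (key x hx).differentiableAt.differentiableWithinAt
  · intro x hx
    rw [interior_Ioi] at hx
    rw [(key x hx).deriv]
    exact keynp x hx
end

section
/- Suppose η = 0 and w is a classical solution of the controlled tube system with boundary input u ≡ 0. Then the energy E is constant on (0,∞). -/
open Set MeasureTheory

noncomputable def D1 (f : ℝ×ℝ → ℝ) (p : ℝ×ℝ) : ℝ := fderiv ℝ f p (1,0)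
noncomputable def D2 (f : ℝ×ℝ → ℝ) (p : ℝ×ℝ) : ℝ := fderiv ℝ f p (0,1)

lemma hasDerivAt_D1 {f : ℝ×ℝ → ℝ} {s t : ℝ} (hf : DifferentiableAt ℝ f (s,t)) :
    HasDerivAt (fun σ => f (σ, t)) (D1 f (s,t)) s := by
  have h := hf.hasFDerivAt.comp_hasDerivAt s ((hasDerivAt_id s).prodMk (hasDerivAt_const s t))
  exact h

lemma hasDerivAt_D2 {f : ℝ×ℝ → ℝ} {s t : ℝ} (hf : DifferentiableAt ℝ f (s,t)) :
    HasDerivAt (fun τ => f (s, τ)) (D2 f (s,t)) t := by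
  have h := hf.hasFDerivAt.comp_hasDerivAt t ((hasDerivAt_const t s).prodMk (hasDerivAt_id t))
  exact h

lemma contDiff_D1 {f : ℝ×ℝ → ℝ} {n : ℕ} (hf : ContDiff ℝ (n+1) f) : ContDiff ℝ n (D1 f) := by
  have : ContDiff ℝ n (fderiv ℝ f) := hf.fderiv_right (by norm_cast)
  exact (ContinuousLinearMap.apply ℝ ℝ ((1:ℝ),(0:ℝ))).contDiff.comp this

lemma contDiff_D2 {f : ℝ×ℝ → ℝ} {n : ℕ} (hf : ContDiff ℝ (n+1) f) : ContDiff ℝ n (D2 f) := by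
  have : ContDiff ℝ n (fderiv ℝ f) := hf.fderiv_right (by norm_cast)
  exact (ContinuousLinearMap.apply ℝ ℝ ((0:ℝ),(1:ℝ))).contDiff.comp this

lemma clairaut {f : ℝ×ℝ → ℝ} (hf : ContDiff ℝ 2 f) (p : ℝ×ℝ) : D1 (D2 f) p = D2 (D1 f) p := by
  have hdf : ContDiff ℝ 1 (fderiv ℝ f) := hf.fderiv_right (by norm_cast)
  have h2 : HasFDerivAt (fderiv ℝ f) (fderiv ℝ (fderiv ℝ f) p) p :=
    (hdf.differentiable (by norm_num) p).hasFDerivAt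
  have hsymm := second_derivative_symmetric (f := f) (f' := fderiv ℝ f)
    (fun y => ((hf.differentiable (by norm_num)) y).hasFDerivAt) h2 (1,0) (0,1)
  have e1 : fderiv ℝ (D2 f) p = (ContinuousLinearMap.apply ℝ ℝ ((0:ℝ),(1:ℝ))).comp
      (fderiv ℝ (fderiv ℝ f) p) := by
    have : D2 f = (ContinuousLinearMap.apply ℝ ℝ ((0:ℝ),(1:ℝ))) ∘ (fderiv ℝ f) := rfl
    rw [this]
    exact ((ContinuousLinearMap.apply ℝ ℝ ((0:ℝ),(1:ℝ))).hasFDerivAt.comp p h2).fderiv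
  have e2 : fderiv ℝ (D1 f) p = (ContinuousLinearMap.apply ℝ ℝ ((1:ℝ),(0:ℝ))).comp
      (fderiv ℝ (fderiv ℝ f) p) := by
    have : D1 f = (ContinuousLinearMap.apply ℝ ℝ ((1:ℝ),(0:ℝ))) ∘ (fderiv ℝ f) := rfl
    rw [this]
    exact ((ContinuousLinearMap.apply ℝ ℝ ((1:ℝ),(0:ℝ))).hasFDerivAt.comp p h2).fderiv
  simp only [D1, D2, e1, e2, ContinuousLinearMap.coe_comp', Function.comp_apply,
    ContinuousLinearMap.apply_apply]
  exact hsymm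

section conv
variable {w : ℝ → ℝ → ℝ} (hw : ContDiff ℝ 4 (Function.uncurry w))
include hw

lemma dws_eq : ∀ s t, dws w s t = D1 (Function.uncurry w) (s,t) := by
  intro s t
  exact (hasDerivAt_D1 (f := Function.uncurry w) ((hw.differentiable (by norm_num)) (s,t))).deriv

lemma dwt_eq : ∀ s t, dwt w s t = D2 (Function.uncurry w) (s,t) := by
  intro s t
  exact (hasDerivAt_D2 (f := Function.uncurry w) ((hw.differentiable (by norm_num)) (s,t))).deriv

lemma dwss_eq : ∀ s t, dwss w s t = D1 (D1 (Function.uncurry w)) (s,t) := by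
  intro s t
  have h3 : ContDiff ℝ 3 (D1 (Function.uncurry w)) := contDiff_D1 (by exact_mod_cast hw)
  have : dwss w s t = deriv (fun σ => D1 (Function.uncurry w) (σ, t)) s := by
    unfold dwss; congr 1; ext σ; exact dws_eq hw σ t
  rw [this]
  exact (hasDerivAt_D1 ((h3.differentiable (by norm_num)) (s,t))).deriv

lemma dwsss_eq : ∀ s t, dwsss w s t = D1 (D1 (D1 (Function.uncurry w))) (s,t) := by
  intro s t
  have h3 : ContDiff ℝ 3 (D1 (Function.uncurry w)) := contDiff_D1 (by exact_mod_cast hw)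
  have h2 : ContDiff ℝ 2 (D1 (D1 (Function.uncurry w))) := contDiff_D1 (by exact_mod_cast h3)
  have : dwsss w s t = deriv (fun σ => D1 (D1 (Function.uncurry w)) (σ, t)) s := by
    unfold dwsss; congr 1; ext σ; exact dwss_eq hw σ t
  rw [this]
  exact (hasDerivAt_D1 ((h2.differentiable (by norm_num)) (s,t))).deriv

lemma dwssss_eq : ∀ s t, dwssss w s t = D1 (D1 (D1 (D1 (Function.uncurry w)))) (s,t) := by
  intro s t
  have h3 : ContDiff ℝ 3 (D1 (Function.uncurry w)) := contDiff_D1 (by exact_mod_cast hw)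
  have h2 : ContDiff ℝ 2 (D1 (D1 (Function.uncurry w))) := contDiff_D1 (by exact_mod_cast h3)
  have h1 : ContDiff ℝ 1 (D1 (D1 (D1 (Function.uncurry w)))) := contDiff_D1 (by exact_mod_cast h2)
  have : dwssss w s t = deriv (fun σ => D1 (D1 (D1 (Function.uncurry w))) (σ, t)) s := by
    unfold dwssss; congr 1; ext σ; exact dwsss_eq hw σ t
  rw [this]
  exact (hasDerivAt_D1 ((h1.differentiable (by norm_num)) (s,t))).deriv

lemma dwst_eq : ∀ s t, dwst w s t = D1 (D2 (Function.uncurry w)) (s,t) := by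
  intro s t
  have h3 : ContDiff ℝ 3 (D2 (Function.uncurry w)) := contDiff_D2 (by exact_mod_cast hw)
  have : dwst w s t = deriv (fun σ => D2 (Function.uncurry w) (σ, t)) s := by
    unfold dwst; congr 1; ext σ; exact dwt_eq hw σ t
  rw [this]
  exact (hasDerivAt_D1 ((h3.differentiable (by norm_num)) (s,t))).deriv

lemma dwtt_eq : ∀ s t, dwtt w s t = D2 (D2 (Function.uncurry w)) (s,t) := by
  intro s t
  have h3 : ContDiff ℝ 3 (D2 (Function.uncurry w)) := contDiff_D2 (by exact_mod_cast hw)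
  have : dwtt w s t = deriv (fun τ => D2 (Function.uncurry w) (s, τ)) t := by
    unfold dwtt; congr 1; ext τ; exact dwt_eq hw s τ
  rw [this]
  exact (hasDerivAt_D2 ((h3.differentiable (by norm_num)) (s,t))).deriv

end conv


lemma mixed_comm {f : ℝ×ℝ → ℝ} (hf : ContDiff ℝ 4 f) (p : ℝ×ℝ) :
    D2 (D1 (D1 f)) p = D1 (D1 (D2 f)) p := by
  have hg1 : ContDiff ℝ 3 (D1 f) := contDiff_D1 (by exact_mod_cast hf)
  have h1 : D2 (D1 (D1 f)) p = D1 (D2 (D1 f)) p :=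
    (clairaut (hg1.of_le (by norm_cast)) p).symm
  have h2 : D2 (D1 f) = D1 (D2 f) := by
    funext q; exact (clairaut (hf.of_le (by norm_cast)) q).symm
  rw [h1, h2]

lemma fubini_cont {h : ℝ×ℝ → ℝ} (hc : Continuous h) {a b c d : ℝ} (hab : a ≤ b) (hcd : c ≤ d) :
    ∫ s in a..b, ∫ t in c..d, h (s,t) = ∫ t in c..d, ∫ s in a..b, h (s,t) := by
  rw [intervalIntegral.integral_of_le hab, intervalIntegral.integral_of_le hcd]
  simp_rw [intervalIntegral.integral_of_le hcd, intervalIntegral.integral_of_le hab]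
  rw [MeasureTheory.integral_integral_swap]
  have hcompact : IsCompact ((Icc a b) ×ˢ (Icc c d)) := isCompact_Icc.prod isCompact_Icc
  have hint : IntegrableOn (fun p : ℝ×ℝ => h p) ((Icc a b) ×ˢ (Icc c d)) volume :=
    hc.continuousOn.integrableOn_compact hcompact
  have hint2 : IntegrableOn (fun p : ℝ×ℝ => h p) ((Ioc a b) ×ˢ (Ioc c d)) volume :=
    hint.mono_set (prod_mono Ioc_subset_Icc_self Ioc_subset_Icc_self)
  have : Integrable (Function.uncurry (fun s t => h (s,t)))
      ((volume.restrict (Ioc a b)).prod (volume.restrict (Ioc c d))) := by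
    rw [Measure.prod_restrict]
    rw [MeasureTheory.Measure.volume_eq_prod] at hint2
    exact hint2
  exact this

lemma key_aux (β γ : ℝ) (w : ℝ → ℝ → ℝ) (hw : IsClassicalSolution β 0 γ (fun _ => 0) w)
    {t₁ t₂ : ℝ} (h1 : 0 < t₁) (h12 : t₁ ≤ t₂) : energy 0 γ w t₁ = energy 0 γ w t₂ := by
  obtain ⟨hsm, hpde, hbc0, hbc1, hbc2, hbc3⟩ := hw
  set f := Function.uncurry w with hf
  -- smoothness ladder
  have hg1 : ContDiff ℝ 3 (D1 f) := contDiff_D1 (by exact_mod_cast hsm)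
  have hg2 : ContDiff ℝ 3 (D2 f) := contDiff_D2 (by exact_mod_cast hsm)
  have hg11 : ContDiff ℝ 2 (D1 (D1 f)) := contDiff_D1 (by exact_mod_cast hg1)
  have hg12 : ContDiff ℝ 2 (D1 (D2 f)) := contDiff_D1 (by exact_mod_cast hg2)
  have hg22 : ContDiff ℝ 2 (D2 (D2 f)) := contDiff_D2 (by exact_mod_cast hg2)
  have hg111 : ContDiff ℝ 1 (D1 (D1 (D1 f))) := contDiff_D1 (by exact_mod_cast hg11)
  have hg112 : ContDiff ℝ 1 (D1 (D1 (D2 f))) := contDiff_D1 (by exact_mod_cast hg12)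
  have hg1111 : Continuous (D1 (D1 (D1 (D1 f)))) :=
    (contDiff_D1 (n := 0) (by exact_mod_cast hg111)).continuous
  -- the integrand and the flux
  set G : ℝ×ℝ → ℝ := fun p => (D1 (D1 f) p)^2 + γ*(D1 f p)^2 + (D2 f p)^2 with hG
  set F : ℝ×ℝ → ℝ := fun p =>
    D1 (D1 f) p * D1 (D2 f) p - D1 (D1 (D1 f)) p * D2 f p + γ * D1 f p * D2 f p with hF
  set hh : ℝ×ℝ → ℝ := fun p =>
    2*(D1 (D1 f) p * D1 (D1 (D2 f)) p + γ * D1 f p * D1 (D2 f) p + D2 f p * D2 (D2 f) p)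
    with hhh
  have hGc : Continuous G := by
    exact ((hg11.continuous.pow 2).add ((continuous_const.mul (hg1.continuous.pow 2)))).add
      (hg2.continuous.pow 2)
  have hhc : Continuous hh := by
    refine continuous_const.mul (((hg11.continuous.mul hg112.continuous).add
      ((continuous_const.mul hg1.continuous).mul hg12.continuous)).add
      (hg2.continuous.mul hg22.continuous))
  -- energy in terms of G
  have hE : ∀ t, energy 0 γ w t = (1/2) * ∫ s in (0:ℝ)..1, G (s,t) := by
    intro t
    unfold energy
    congr 1
    apply intervalIntegral.integral_congr
    intro s _
    simp only [hG, dwss_eq hsm, dws_eq hsm, dwt_eq hsm]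
    norm_num
    rfl
  -- step A : FTC in time
  have stepA : ∀ s : ℝ, G (s,t₂) - G (s,t₁) = ∫ t in t₁..t₂, hh (s,t) := by
    intro s
    have hder : ∀ t ∈ uIcc t₁ t₂, HasDerivAt (fun τ => G (s,τ)) (hh (s,t)) t := by
      intro t _
      have hd11 : HasDerivAt (fun τ => D1 (D1 f) (s,τ)) (D1 (D1 (D2 f)) (s,t)) t := by
        have := hasDerivAt_D2 ((hg11.differentiable (by norm_num)) (s,t))
        rwa [mixed_comm hsm] at this
      have hd1 : HasDerivAt (fun τ => D1 f (s,τ)) (D1 (D2 f) (s,t)) t := by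
        have := hasDerivAt_D2 ((hg1.differentiable (by norm_num)) (s,t))
        rwa [← clairaut (hsm.of_le (by norm_cast))] at this
      have hd2 : HasDerivAt (fun τ => D2 f (s,τ)) (D2 (D2 f) (s,t)) t :=
        hasDerivAt_D2 ((hg2.differentiable (by norm_num)) (s,t))
      have := ((hd11.mul hd11).add ((hd1.mul hd1).const_mul γ)).add (hd2.mul hd2)
      convert this using 1
      · rfl
      · rfl
      · ext τ; simp only [hG, Pi.add_apply, Pi.mul_apply, Pi.pow_apply]; ring
      · simp only [hhh]; ring
    have hint : IntervalIntegrable (fun t => hh (s,t)) volume t₁ t₂ :=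
      (hhc.comp (Continuous.prodMk_right s)).intervalIntegrable _ _
    rw [intervalIntegral.integral_eq_sub_of_hasDerivAt hder hint]
  -- step B : flux computation
  have stepB : ∀ t ∈ uIcc t₁ t₂, (∫ s in (0:ℝ)..1, hh (s,t)) = 0 := by
    intro t ht
    have ht0 : 0 < t := lt_of_lt_of_le h1 (by
      rcases ht with ⟨h, _⟩
      simpa [inf_eq_left.mpr h12] using h)
    -- PDE in D-form
    have hpde' : ∀ s ∈ Icc (0:ℝ) 1,
        D1 (D1 (D1 (D1 f))) (s,t) - γ * D1 (D1 f) (s,t) + D2 (D2 f) (s,t) = 0 := by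
      intro s hs
      have := hpde s hs t ht0
      rw [dwssss_eq hsm, dwss_eq hsm, dwtt_eq hsm, dwst_eq hsm] at this
      linear_combination this
    have hder : ∀ s ∈ uIcc (0:ℝ) 1, HasDerivAt (fun σ => 2 * F (σ,t)) (hh (s,t)) s := by
      intro s hs
      rw [Set.uIcc_of_le (by norm_num : (0:ℝ) ≤ 1)] at hs
      have ha : HasDerivAt (fun σ => D1 (D1 f) (σ,t)) (D1 (D1 (D1 f)) (s,t)) s :=
        hasDerivAt_D1 ((hg11.differentiable (by norm_num)) (s,t))
      have hb : HasDerivAt (fun σ => D1 (D2 f) (σ,t)) (D1 (D1 (D2 f)) (s,t)) s :=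
        hasDerivAt_D1 ((hg12.differentiable (by norm_num)) (s,t))
      have hc : HasDerivAt (fun σ => D1 (D1 (D1 f)) (σ,t)) (D1 (D1 (D1 (D1 f))) (s,t)) s :=
        hasDerivAt_D1 ((hg111.differentiable (by norm_num)) (s,t))
      have hd : HasDerivAt (fun σ => D2 f (σ,t)) (D1 (D2 f) (s,t)) s :=
        hasDerivAt_D1 ((hg2.differentiable (by norm_num)) (s,t))
      have he : HasDerivAt (fun σ => D1 f (σ,t)) (D1 (D1 f) (s,t)) s :=
        hasDerivAt_D1 ((hg1.differentiable (by norm_num)) (s,t))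
      have hprod := ((((ha.mul hb).sub (hc.mul hd)).add ((he.mul hd).const_mul γ)).const_mul 2)
      convert hprod using 1
      · rfl
      · rfl
      · ext σ; simp only [hF, Pi.add_apply, Pi.sub_apply, Pi.mul_apply]; ring
      · have hp := hpde' s hs
        simp only [hhh]
        linear_combination (2 * D2 f (s,t)) * hp
    have hint : IntervalIntegrable (fun s => hh (s,t)) volume 0 1 := by
      exact (hhc.comp (continuous_id.prodMk continuous_const)).intervalIntegrable _ _
    rw [intervalIntegral.integral_eq_sub_of_hasDerivAt hder hint]
    -- boundary values
    have hb2 : D1 (D1 f) (1,t) = 0 := by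
      have := hbc2 t ht0; rwa [dwss_eq hsm] at this
    have hb1 : D1 (D1 f) (0,t) = 0 := by
      have := hbc1 t ht0; rwa [dwss_eq hsm] at this
    have hb3 : D1 (D1 (D1 f)) (1,t) = γ * D1 f (1,t) := by
      have := hbc3 t ht0; rw [dwsss_eq hsm, dws_eq hsm] at this; simpa using this
    have hb0 : D2 f (0,t) = 0 := by
      have heq : (fun τ => w 0 τ) =ᶠ[nhds t] (fun _ => (0:ℝ)) := by
        filter_upwards [Ioi_mem_nhds ht0] with τ hτ
        exact hbc0 τ hτ
      have : dwt w 0 t = 0 := by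
        unfold dwt; rw [heq.deriv_eq]; simp
      rwa [dwt_eq hsm] at this
    simp only [hF, hb2, hb1, hb3, hb0]
    ring
  -- assemble
  have hG1 : IntervalIntegrable (fun s => G (s,t₁)) volume 0 1 :=
    (hGc.comp (continuous_id.prodMk continuous_const)).intervalIntegrable _ _
  have hG2 : IntervalIntegrable (fun s => G (s,t₂)) volume 0 1 :=
    (hGc.comp (continuous_id.prodMk continuous_const)).intervalIntegrable _ _
  have key : energy 0 γ w t₂ - energy 0 γ w t₁ = 0 := by
    rw [hE, hE, ← mul_sub, ← intervalIntegral.integral_sub hG2 hG1]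
    have e1 : (∫ s in (0:ℝ)..1, (G (s,t₂) - G (s,t₁)))
        = ∫ s in (0:ℝ)..1, ∫ t in t₁..t₂, hh (s,t) := by
      apply intervalIntegral.integral_congr
      intro s _
      exact stepA s
    rw [e1, fubini_cont hhc (by norm_num) h12]
    have e2 : (∫ t in t₁..t₂, ∫ s in (0:ℝ)..1, hh (s,t))
        = ∫ t in t₁..t₂, (0:ℝ) := by
      apply intervalIntegral.integral_congr
      intro t ht
      exact stepB t ht
    rw [e2]
    simp
  linarith [key]

/-- if `η = 0` and the boundary input vanishes identically, then
the energy is constant on `(0,∞)`. -/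

theorem energy_constant_of_no_flow (β η γ : ℝ) (hβ : β ∈ Ioo (0:ℝ) 1)
    (hη : 0 ≤ η) (hγ : η^2 < γ) (hη0 : η = 0)
    (w : ℝ → ℝ → ℝ)
    (hw : IsClassicalSolution β η γ (fun _ => 0) w) :
    ∀ t₁ ∈ Ioi (0:ℝ), ∀ t₂ ∈ Ioi (0:ℝ), energy η γ w t₁ = energy η γ w t₂ := by
  subst hη0
  intro t₁ ht₁ t₂ ht₂
  rcases le_total t₁ t₂ with h | h
  · exact key_aux β γ w hw ht₁ h
  · exact (key_aux β γ w hw ht₂ h).symm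
end

section
/- The number λ = 0 is not an eigenvalue of problem (P): every function w : [0,1] → ℂ of class C⁴ satisfying w''''(s) − (γ − η²)·w''(s) = 0 on [0,1] with w(0) = 0, w''(0) = 0, w''(1) = 0 and w'''(1) − (γ − η²)·w'(1) = 0 is identically zero on [0,1]. -/
open Set Complex

section Aux

lemma key_real (c : ℝ) (hc : 0 < c) (f : ℝ → ℝ) (hf : ContDiff ℝ 2 f)
    (hode : ∀ s ∈ Icc (0:ℝ) 1, deriv (deriv f) s = c * f s)
    (hf0 : f 0 = 0) (hf1 : f 1 = 0) : ∀ s ∈ Icc (0:ℝ) 1, f s = 0 := by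
  have hfd : Differentiable ℝ f := hf.differentiable (by norm_num)
  have hf' : ContDiff ℝ 1 (deriv f) := (contDiff_succ_iff_deriv.mp (show ContDiff ℝ (1+1) f from hf)).2.2
  have hfd' : Differentiable ℝ (deriv f) := hf'.differentiable one_ne_zero
  set E : ℝ → ℝ := fun s => (deriv f s)^2 - c * (f s)^2 with hE
  have hEderiv : ∀ x ∈ Icc (0:ℝ) 1, HasDerivAt E 0 x := by
    intro x hx
    have h1 : HasDerivAt (fun s => (deriv f s)^2)
        (2 * deriv f x * deriv (deriv f) x) x := by
      simpa [mul_comm] using ((hfd' x).hasDerivAt.fun_pow 2)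
    have h2 : HasDerivAt (fun s => c * (f s)^2) (c * (2 * f x * deriv f x)) x := by
      exact (((hfd x).hasDerivAt.pow 2).const_mul c).congr_deriv (by ring)
    have := h1.fun_sub h2
    rw [hode x hx] at this
    exact this.congr_deriv (by ring)
  have hEconst : ∀ x ∈ Icc (0:ℝ) 1, E x = E 0 := by
    apply constant_of_has_deriv_right_zero
    · exact (((hfd'.continuous.pow 2).sub ((continuous_const.mul (hfd.continuous.pow 2))))).continuousOn
    · intro x hx
      exact (hEderiv x (Ico_subset_Icc_self hx)).hasDerivWithinAt
  obtain ⟨t, ht, hmax⟩ := isCompact_Icc.exists_isMaxOn (nonempty_Icc.mpr zero_le_one)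
    ((hfd.continuous.pow 2).continuousOn (s := Icc (0:ℝ) 1))
  by_cases hft : f t = 0
  · intro s hs
    have h := hmax hs
    simp only [hft, mem_setOf_eq, Pi.pow_apply] at h
    nlinarith [sq_nonneg (f s)]
  · exfalso
    have ht0 : t ≠ 0 := by rintro rfl; exact hft hf0
    have ht1 : t ≠ 1 := by rintro rfl; exact hft hf1
    have htI : t ∈ Ioo (0:ℝ) 1 := ⟨lt_of_le_of_ne ht.1 (Ne.symm ht0), lt_of_le_of_ne ht.2 ht1⟩
    have hloc : IsLocalMax (fun s => (f s)^2) t := hmax.isLocalMax (Icc_mem_nhds htI.1 htI.2)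
    have hd : deriv (fun s => (f s)^2) t = 0 := hloc.deriv_eq_zero
    have hD : HasDerivAt (fun s => (f s)^2) (2 * f t * deriv f t) t := by
      simpa [mul_comm] using ((hfd t).hasDerivAt.fun_pow 2)
    rw [hD.deriv] at hd
    have hdf : deriv f t = 0 := by
      rcases mul_eq_zero.mp hd with h | h
      · rcases mul_eq_zero.mp h with h | h
        · norm_num at h
        · exact absurd h hft
      · exact h
    have h1 : E t = E 0 := hEconst t ht
    have h2 : E 0 = (deriv f 0)^2 := by simp [hE, hf0]
    have h3 : E t = - (c * (f t)^2) := by simp [hE, hdf]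
    nlinarith [sq_nonneg (deriv f 0), sq_nonneg (f t), pow_pos (abs_pos.mpr hft) 2, _root_.sq_abs (f t)]

lemma deriv_comp_clm (φ : ℂ →L[ℝ] ℝ) (g : ℝ → ℂ) (hg : Differentiable ℝ g) :
    deriv (fun s => φ (g s)) = fun s => φ (deriv g s) := by
  funext x
  exact (φ.hasFDerivAt.comp_hasDerivAt x (hg x).hasDerivAt).deriv

theorem zero_ev (γ η : ℝ) (hγ : η^2 < γ) (w : ℝ → ℂ) (hw : ContDiff ℝ 4 w)
    (hode : ∀ s ∈ Icc (0:ℝ) 1,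
      iteratedDeriv 4 w s - ((γ - η^2 : ℝ) : ℂ) * iteratedDeriv 2 w s = 0)
    (h0 : w 0 = 0) (h0'' : iteratedDeriv 2 w 0 = 0)
    (h1'' : iteratedDeriv 2 w 1 = 0)
    (h1''' : iteratedDeriv 3 w 1 - ((γ - η^2 : ℝ) : ℂ) * deriv w 1 = 0) :
    ∀ s ∈ Icc (0:ℝ) 1, w s = 0 := by
  set c : ℝ := γ - η^2 with hcdef
  have hc : 0 < c := sub_pos.mpr hγ
  set u : ℝ → ℂ := deriv (deriv w) with hudef
  have hw1 : ContDiff ℝ 3 (deriv w) :=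
    (contDiff_succ_iff_deriv.mp (show ContDiff ℝ (3+1) w from hw)).2.2
  have hw2 : ContDiff ℝ 2 u :=
    (contDiff_succ_iff_deriv.mp (show ContDiff ℝ (2+1) (deriv w) from hw1)).2.2
  have hw3 : ContDiff ℝ 1 (deriv u) :=
    (contDiff_succ_iff_deriv.mp (show ContDiff ℝ (1+1) u from hw2)).2.2
  have hud : Differentiable ℝ u := hw2.differentiable (by norm_num)
  have hud' : Differentiable ℝ (deriv u) := hw3.differentiable one_ne_zero
  have hit2 : iteratedDeriv 2 w = u := by
    simp [hudef, iteratedDeriv_succ, iteratedDeriv_zero]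
  have hit3 : iteratedDeriv 3 w = deriv u := by
    simp [hudef, iteratedDeriv_succ, iteratedDeriv_zero]
  have hit4 : iteratedDeriv 4 w = deriv (deriv u) := by
    simp [hudef, iteratedDeriv_succ, iteratedDeriv_zero]
  have hodeu : ∀ s ∈ Icc (0:ℝ) 1, deriv (deriv u) s = (c : ℂ) * u s := by
    intro s hs
    have := hode s hs
    rw [hit4, hit2] at this
    linear_combination this
  -- real and imaginary parts
  have huIcc : ∀ s ∈ Icc (0:ℝ) 1, u s = 0 := by
    have main : ∀ φ : ℂ →L[ℝ] ℝ, ∀ s ∈ Icc (0:ℝ) 1, φ (u s) = 0 := by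
      intro φ
      apply key_real c hc (fun s => φ (u s)) (φ.contDiff.comp hw2)
      · intro s hs
        simp only [deriv_comp_clm φ u hud, deriv_comp_clm φ (deriv u) hud', hodeu s hs]
        rw [show ((c:ℝ):ℂ) * u s = c • u s by simp [Complex.real_smul], φ.map_smul]
        simp
      · rw [← hit2, h0'', φ.map_zero]
      · rw [← hit2, h1'', φ.map_zero]
    intro s hs
    have hre := main Complex.reCLM s hs
    have him := main Complex.imCLM s hs
    simp only [Complex.reCLM_apply, Complex.imCLM_apply] at hre him
    exact Complex.ext hre him
  -- deriv u vanishes at 1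
  have hdu1 : deriv u 1 = 0 := by
    have hEq : EqOn (deriv u) (fun _ => (0:ℂ)) (Ioo 0 1) := by
      intro s hs
      have hev : u =ᶠ[nhds s] (fun _ => (0:ℂ)) :=
        Filter.eventuallyEq_of_mem (Icc_mem_nhds hs.1 hs.2) huIcc
      simp [hev.deriv_eq]
    have hcl : EqOn (deriv u) (fun _ => (0:ℂ)) (closure (Ioo 0 1)) :=
      hEq.closure hw3.continuous continuous_const
    have h1mem : (1:ℝ) ∈ closure (Ioo (0:ℝ) 1) := by
      rw [closure_Ioo (by norm_num : (0:ℝ) ≠ 1)]; exact ⟨zero_le_one, le_refl 1⟩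
    exact hcl h1mem
  have hdw1 : deriv w 1 = 0 := by
    rw [hit3, hdu1] at h1'''
    have hcne : ((c : ℝ) : ℂ) ≠ 0 := Complex.ofReal_ne_zero.mpr (ne_of_gt hc)
    field_simp at h1'''
    exact (mul_eq_zero.mp (show ((c : ℝ) : ℂ) * deriv w 1 = 0 by linear_combination -h1''')).resolve_left hcne
  -- deriv w constant on Icc, hence zero
  have hdwconst : ∀ x ∈ Icc (0:ℝ) 1, deriv w x = deriv w 0 := by
    apply constant_of_has_deriv_right_zero (hw1.continuous.continuousOn)
    intro x hx
    have h := (hw1.differentiable (by norm_num) x).hasDerivAt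
    rw [show deriv (deriv w) x = 0 from huIcc x (Ico_subset_Icc_self hx)] at h
    exact h.hasDerivWithinAt
  have hdw0 : deriv w 0 = 0 := by
    have := hdwconst 1 ⟨zero_le_one, le_refl 1⟩
    rw [hdw1] at this; exact this.symm
  have hwconst : ∀ x ∈ Icc (0:ℝ) 1, w x = w 0 := by
    apply constant_of_has_deriv_right_zero (hw.continuous.continuousOn)
    intro x hx
    have h := (hw.differentiable (by norm_num) x).hasDerivAt
    rw [hdwconst x (Ico_subset_Icc_self hx), hdw0] at h
    exact h.hasDerivWithinAt
  intro s hs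
  rw [hwconst s hs, h0]

end Aux

/-- An eigenpair of problem (P): `w` is a nonzero `C⁴` function on `[0,1]`
satisfying the ODE `w'''' − (γ−η²)w'' + 2λβη w' + λ²w = 0` together with the
boundary conditions `w(0) = w''(0) = 0`, `w''(1) + λκ w'(1) = 0`,
`w'''(1) − (γ−η²) w'(1) = 0`. -/
def IsEigenpairP (β η γ κ : ℝ) (l : ℂ) (w : ℝ → ℂ) : Prop :=
  ContDiff ℝ 4 w ∧ (∃ s ∈ Icc (0:ℝ) 1, w s ≠ 0) ∧
  (∀ s ∈ Icc (0:ℝ) 1,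
    iteratedDeriv 4 w s - ((γ - η^2 : ℝ) : ℂ) * iteratedDeriv 2 w s
      + 2 * l * ((β * η : ℝ) : ℂ) * deriv w s + l^2 * w s = 0) ∧
  w 0 = 0 ∧ iteratedDeriv 2 w 0 = 0 ∧
  iteratedDeriv 2 w 1 + l * ((κ : ℝ) : ℂ) * deriv w 1 = 0 ∧
  iteratedDeriv 3 w 1 - ((γ - η^2 : ℝ) : ℂ) * deriv w 1 = 0

/-- An eigenvalue of problem (P). -/
def IsEigenvalueP (β η γ κ : ℝ) (l : ℂ) : Prop :=
  ∃ w : ℝ → ℂ, IsEigenpairP β η γ κ l w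

/-- `λ = 0` is not an eigenvalue of problem (P): every `C⁴`
function satisfying the corresponding boundary-value problem vanishes
identically on `[0,1]`. -/
theorem zero_not_eigenvalue (β η γ κ : ℝ) (hβ : β ∈ Ioo (0:ℝ) 1) (hη : 0 ≤ η)
    (hκ : 0 ≤ κ) (hγ : η^2 < γ) (w : ℝ → ℂ) (hw : ContDiff ℝ 4 w)
    (hode : ∀ s ∈ Icc (0:ℝ) 1,
      iteratedDeriv 4 w s - ((γ - η^2 : ℝ) : ℂ) * iteratedDeriv 2 w s = 0)
    (h0 : w 0 = 0) (h0'' : iteratedDeriv 2 w 0 = 0)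
    (h1'' : iteratedDeriv 2 w 1 = 0)
    (h1''' : iteratedDeriv 3 w 1 - ((γ - η^2 : ℝ) : ℂ) * deriv w 1 = 0) :
    ∀ s ∈ Icc (0:ℝ) 1, w s = 0 :=
  zero_ev γ η hγ w hw hode h0 h0'' h1'' h1'''
end
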